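/- Let π be a uniformly random bijection from a set V₁ of size n to a set V₂ of size n, and let H₁, H₂ be simple graphs with vertex sets contained in V₁ and V₂ respectively. Then the probability that π maps H₁ exactly onto H₂ (i.e. π(E(H₁)) = E(H₂) as edge sets) is at most min((v(H₁)/n)^{v(H₁)}, (v(H₂)/n)^{v(H₂)}). -/

import Mathlib

lemma aux_pow_le_choose_mul : ∀ k n : ℕ, k ≤ n → n ^ k ≤ n.choose k * k ^ k := by
  intro k
  induction k with
  | zero => simp
  | succ k ih =>
    intro n hn
    obtain ⟨m, rfl⟩ : ∃ m, n = m + 1 := ⟨n - 1, by omega⟩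
    have hkm : k ≤ m := by omega
    have hstep : (m+1)^k ≤ m.choose k * (k+1)^k := by
      rcases Nat.eq_zero_or_pos k with rfl | hk
      · simp
      · have h1 : (m+1)^k * k^k ≤ (m.choose k * (k+1)^k) * k^k := by
          calc (m+1)^k * k^k = ((m+1)*k)^k := (mul_pow _ _ _).symm
            _ ≤ (m*(k+1))^k := Nat.pow_le_pow_left (by nlinarith) _
            _ = m^k * (k+1)^k := mul_pow _ _ _
            _ ≤ (m.choose k * k^k) * (k+1)^k := Nat.mul_le_mul_right _ (ih m hkm)
            _ = (m.choose k * (k+1)^k) * k^k := by ring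
        exact Nat.le_of_mul_le_mul_right h1 (Nat.pow_pos hk)
    calc (m+1)^(k+1) = (m+1) * (m+1)^k := by ring
      _ ≤ (m+1) * (m.choose k * (k+1)^k) := Nat.mul_le_mul_left _ hstep
      _ = ((m+1) * m.choose k) * (k+1)^k := by ring
      _ = ((m+1).choose (k+1) * (k+1)) * (k+1)^k := by rw [Nat.add_one_mul_choose_eq]
      _ = (m+1).choose (k+1) * (k+1)^(k+1) := by ring

lemma aux_support_map {V₁ V₂ : Type*} (H : SimpleGraph V₁) (f : V₁ ↪ V₂) :
    (H.map f).support = f '' H.support := by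
  ext v
  simp only [SimpleGraph.mem_support, SimpleGraph.map_adj, Set.mem_image]
  constructor
  · rintro ⟨w, a, b, hab, rfl, rfl⟩
    exact ⟨a, ⟨b, hab⟩, rfl⟩
  · rintro ⟨a, ⟨b, hab⟩, rfl⟩
    exact ⟨f b, a, b, hab, rfl, rfl⟩

-- real version of the counting inequality
lemma aux_real (k n : ℕ) (hk : k ≤ n) (hn : 0 < n) :
    ((k.factorial * (n - k).factorial : ℕ) : ℝ) / n.factorial ≤ ((k : ℝ) / n) ^ k := by
  have hnat : n ^ k * (k.factorial * (n-k).factorial) ≤ n.factorial * k ^ k := by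
    calc n ^ k * (k.factorial * (n-k).factorial)
        ≤ (n.choose k * k ^ k) * (k.factorial * (n-k).factorial) :=
          Nat.mul_le_mul_right _ (aux_pow_le_choose_mul k n hk)
      _ = (n.choose k * k.factorial * (n-k).factorial) * k ^ k := by ring
      _ = n.factorial * k ^ k := by rw [Nat.choose_mul_factorial_mul_factorial hk]
  have hfpos : (0:ℝ) < n.factorial := by positivity
  have hnpos : (0:ℝ) < (n:ℝ) ^ k := by positivity
  rw [div_pow, div_le_div_iff₀ hfpos hnpos]
  calc ((k.factorial * (n - k).factorial : ℕ) : ℝ) * (n:ℝ)^k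
      = ((n ^ k * (k.factorial * (n-k).factorial) : ℕ) : ℝ) := by push_cast; ring
    _ ≤ ((n.factorial * k ^ k : ℕ) : ℝ) := by exact_mod_cast Nat.cast_le.mpr hnat
    _ = (k:ℝ)^k * n.factorial := by push_cast; ring


/-- Let `π` be a uniformly random bijection between two `n`-element sets and let
`H₁`, `H₂` be simple graphs on (subsets of) these sets, with vertex sets taken to be
their supports.  The probability that `π` maps `H₁` exactly onto `H₂` is at most
`min((v(H₁)/n)^{v(H₁)}, (v(H₂)/n)^{v(H₂)})`. -/
theorem prob_map_graph_le_min {V₁ V₂ : Type*} [Fintype V₁] [Fintype V₂]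
    (n : ℕ) (hn : 0 < n)
    (h₁ : Fintype.card V₁ = n) (h₂ : Fintype.card V₂ = n)
    (H₁ : SimpleGraph V₁) (H₂ : SimpleGraph V₂) :
    (Nat.card {π : V₁ ≃ V₂ // H₁.map π.toEmbedding = H₂} : ℝ) / n.factorial ≤
      min (((H₁.support.ncard : ℝ) / n) ^ H₁.support.ncard)
          (((H₂.support.ncard : ℝ) / n) ^ H₂.support.ncard) := by
  classical
  set S₁ := H₁.support with hS₁
  set S₂ := H₂.support with hS₂
  have hrhs0 : (0:ℝ) ≤ min (((S₁.ncard : ℝ) / n) ^ S₁.ncard) (((S₂.ncard : ℝ) / n) ^ S₂.ncard) :=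
    le_min (by positivity) (by positivity)
  rcases Nat.eq_zero_or_pos (Nat.card {π : V₁ ≃ V₂ // H₁.map π.toEmbedding = H₂}) with h0 | hpos
  · rw [h0]; simpa using hrhs0
  · obtain ⟨⟨π₀, hπ₀⟩⟩ := (Nat.card_pos_iff.mp hpos).1
    have key : ∀ (π : V₁ ≃ V₂), H₁.map π.toEmbedding = H₂ → ∀ a, (a ∈ S₁ ↔ π a ∈ S₂) := by
      intro π hπ a
      have himg : S₂ = ⇑π '' S₁ := by
        rw [hS₂, ← hπ, aux_support_map]; simp [hS₁]
      rw [himg]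
      exact ⟨fun ha => Set.mem_image_of_mem _ ha,
        fun h => by rcases h with ⟨b, hb, hba⟩; rwa [← π.injective hba]⟩
    have himg0 : S₂ = ⇑π₀ '' S₁ := by
      rw [hS₂, ← hπ₀, aux_support_map]; simp [hS₁]
    set k := S₁.ncard with hk
    have hk2 : S₂.ncard = k := by
      rw [himg0, Set.ncard_image_of_injective _ π₀.injective]
    have hkn : k ≤ n := by
      have := Set.ncard_le_ncard (Set.subset_univ S₁) Set.finite_univ
      rwa [Set.ncard_univ, Nat.card_eq_fintype_card, h₁] at this
    rw [hk2, min_self]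
    -- injection into pairs of restricted equivalences
    haveI : Fintype ↥S₁ := Fintype.ofFinite _
    haveI : Fintype ↥S₂ := Fintype.ofFinite _
    haveI : Fintype ↥(S₁ᶜ) := Fintype.ofFinite _
    haveI : Fintype ↥(S₂ᶜ) := Fintype.ofFinite _
    set Φ : {π : V₁ ≃ V₂ // H₁.map π.toEmbedding = H₂} →
        ((↥S₁ ≃ ↥S₂) × (↥(S₁ᶜ) ≃ ↥(S₂ᶜ))) :=
      fun p => ⟨Equiv.subtypeEquiv p.1 (key p.1 p.2),
        Equiv.subtypeEquiv p.1 (fun a => by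
          simpa [Set.mem_compl_iff] using (key p.1 p.2 a).not)⟩ with hΦdef
    have hΦ : Function.Injective Φ := by
      intro p q h
      have h1 := congrArg Prod.fst h
      have h2 := congrArg Prod.snd h
      apply Subtype.ext; apply Equiv.ext; intro a
      by_cases ha : a ∈ S₁
      · simpa [hΦdef] using congrArg (fun e => ((e ⟨a, ha⟩ : ↥S₂) : V₂)) h1
      · simpa [hΦdef] using congrArg (fun e => ((e ⟨a, ha⟩ : ↥(S₂ᶜ)) : V₂)) h2
    have hcount : Nat.card {π : V₁ ≃ V₂ // H₁.map π.toEmbedding = H₂} ≤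
        k.factorial * (n - k).factorial := by
      have hle := Nat.card_le_card_of_injective Φ hΦ
      have cS1 : Nat.card ↥S₁ = k := Nat.card_coe_set_eq S₁
      have cS1c : Nat.card ↥(S₁ᶜ) = n - k := by
        have h := Set.ncard_add_ncard_compl S₁ (Set.toFinite _) (Set.toFinite _)
        rw [Nat.card_eq_fintype_card, h₁] at h
        rw [Nat.card_coe_set_eq]; omega
      have c1 : Nat.card (↥S₁ ≃ ↥S₂) = k.factorial := by
        rw [Nat.card_eq_fintype_card, Fintype.card_equiv (Equiv.subtypeEquiv π₀ (key π₀ hπ₀)),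
          ← Nat.card_eq_fintype_card, cS1]
      have c2 : Nat.card (↥(S₁ᶜ) ≃ ↥(S₂ᶜ)) = (n - k).factorial := by
        rw [Nat.card_eq_fintype_card, Fintype.card_equiv
          (Equiv.subtypeEquiv π₀ (fun a => by
            simpa [Set.mem_compl_iff] using (key π₀ hπ₀ a).not)),
          ← Nat.card_eq_fintype_card, cS1c]
      calc Nat.card {π : V₁ ≃ V₂ // H₁.map π.toEmbedding = H₂}
          ≤ Nat.card ((↥S₁ ≃ ↥S₂) × (↥(S₁ᶜ) ≃ ↥(S₂ᶜ))) := hle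
        _ = k.factorial * (n - k).factorial := by rw [Nat.card_prod, c1, c2]
    calc (Nat.card {π : V₁ ≃ V₂ // H₁.map π.toEmbedding = H₂} : ℝ) / n.factorial
        ≤ ((k.factorial * (n - k).factorial : ℕ) : ℝ) / n.factorial := by
          gcongr
      _ ≤ ((k : ℝ) / n) ^ k := aux_real k n hkn hn
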